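/- Let f: O → ℝ^d be twice continuously differentiable on a convex open neighbourhood O of a root u* (f(u*)=0), with Df Lipschitz on O with constant θ, the map u ↦ (Df(u))⁻¹ Lipschitz on O with constant θ̄ (in an operator norm induced by a norm on ℝ^d), and set ρ* = ‖(Df(u*))⁻¹‖. If u⁽⁰⁾ ∈ O satisfies ‖u⁽⁰⁾ − u*‖ ≤ min(ρ*/θ̄, 1/(2θρ*)), then the Newton iterates u⁽ⁿ⁺¹⁾ = u⁽ⁿ⁾ − (Df(u⁽ⁿ⁾))⁻¹ f(u⁽ⁿ⁾) remain in the ball, converge to u*, and satisfy the quadratic estimate ‖u⁽ⁿ⁺¹⁾ − u*‖ ≤ ρ* θ ‖u⁽ⁿ⁾ − u*‖². -/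

import Mathlib

open Filter Topology Set

lemma newton_taylor_aux {E : Type*} [NormedAddCommGroup E] [NormedSpace ℝ E]
    {s : Set E} (hs : Convex ℝ s) {f : E → E} {Df : E → (E →L[ℝ] E)}
    (hf : ∀ u ∈ s, HasFDerivAt f (Df u) u) {θ : ℝ}
    (hLip : ∀ u ∈ s, ∀ v ∈ s, ‖Df u - Df v‖ ≤ θ * ‖u - v‖)
    {x y : E} (hx : x ∈ s) (hy : y ∈ s) :
    ‖f y - f x - Df x (y - x)‖ ≤ θ / 2 * ‖y - x‖ ^ 2 := by
  set v : E := y - x with hv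
  have hmem : ∀ t ∈ Icc (0:ℝ) 1, x + t • v ∈ s := by
    intro t ht
    have h := hs hx hy (by linarith [ht.2] : (0:ℝ) ≤ 1 - t) ht.1 (by ring)
    have : (1 - t) • x + t • y = x + t • v := by
      rw [hv, smul_sub, sub_smul, one_smul]; abel
    rwa [this] at h
  set F : ℝ → E := fun t => f (x + t • v) - t • (Df x v) - f x with hF
  have hderiv : ∀ t ∈ Icc (0:ℝ) 1, HasDerivAt F (Df (x + t • v) v - Df x v) t := by
    intro t ht
    have h1 : HasDerivAt (fun t : ℝ => x + t • v) v t := by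
      simpa using ((hasDerivAt_id t).smul_const v).const_add x
    have h2 : HasDerivAt (fun t : ℝ => f (x + t • v)) (Df (x + t • v) v) t :=
      (hf _ (hmem t ht)).comp_hasDerivAt t h1
    have h3 : HasDerivAt (fun t : ℝ => t • (Df x v)) (Df x v) t := by
      simpa using (hasDerivAt_id t).smul_const (Df x v)
    exact (h2.sub h3).sub_const (f x)
  have hcont : ContinuousOn F (Icc 0 1) := fun t ht =>
    (hderiv t ht).continuousAt.continuousWithinAt
  set B : ℝ → ℝ := fun t => θ * ‖v‖ ^ 2 * (t ^ 2 / 2) with hB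
  have hB' : ∀ t : ℝ, HasDerivAt B (θ * ‖v‖ ^ 2 * t) t := by
    intro t
    have h := ((hasDerivAt_pow 2 t).div_const 2).const_mul (θ * ‖v‖ ^ 2)
    refine h.congr_deriv ?_
    push_cast
    ring
  have bound : ∀ t ∈ Ico (0:ℝ) 1, ‖Df (x + t • v) v - Df x v‖ ≤ θ * ‖v‖ ^ 2 * t := by
    intro t ht
    have h4 : ‖Df (x + t • v) v - Df x v‖ ≤ ‖Df (x + t • v) - Df x‖ * ‖v‖ := by
      simpa using (Df (x + t • v) - Df x).le_opNorm v
    have h5 : ‖Df (x + t • v) - Df x‖ ≤ θ * ‖t • v‖ := by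
      simpa using hLip _ (hmem t ⟨ht.1, ht.2.le⟩) x hx
    have h6 : ‖t • v‖ = t * ‖v‖ := by
      rw [norm_smul, Real.norm_eq_abs, abs_of_nonneg ht.1]
    calc ‖Df (x + t • v) v - Df x v‖ ≤ ‖Df (x + t • v) - Df x‖ * ‖v‖ := h4
      _ ≤ (θ * ‖t • v‖) * ‖v‖ := mul_le_mul_of_nonneg_right h5 (norm_nonneg v)
      _ = θ * ‖v‖ ^ 2 * t := by rw [h6]; ring
  have ha : ‖F 0‖ ≤ B 0 := by simp [hF, hB]
  have key := image_norm_le_of_norm_deriv_right_le_deriv_boundary hcont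
    (fun t ht => (hderiv t ⟨ht.1, ht.2.le⟩).hasDerivWithinAt) ha hB' bound
    (right_mem_Icc.mpr zero_le_one)
  have hF1 : F 1 = f y - f x - Df x (y - x) := by
    simp only [hF, one_smul, add_sub_cancel, hv]
    abel
  have hB1 : B 1 = θ / 2 * ‖y - x‖ ^ 2 := by simp [hB, hv]; ring
  rw [← hF1, ← hB1]
  exact key

theorem newton_quadratic_convergence
    {E : Type*} [NormedAddCommGroup E] [NormedSpace ℝ E] [FiniteDimensional ℝ E]
    (O : Set E) (hO : IsOpen O) (hOconv : Convex ℝ O)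
    (f : E → E) (Df : E → (E →L[ℝ] E)) (g : E → (E →L[ℝ] E))
    (hf : ∀ u ∈ O, HasFDerivAt f (Df u) u)
    (hf' : ∀ u ∈ O, DifferentiableAt ℝ Df u)  -- f twice differentiable on O
    (hinv₁ : ∀ u ∈ O, (Df u).comp (g u) = ContinuousLinearMap.id ℝ E)
    (hinv₂ : ∀ u ∈ O, (g u).comp (Df u) = ContinuousLinearMap.id ℝ E)
    (θ θbar : ℝ)
    (hLip : ∀ u ∈ O, ∀ v ∈ O, ‖Df u - Df v‖ ≤ θ * ‖u - v‖)
    (hLipInv : ∀ u ∈ O, ∀ v ∈ O, ‖g u - g v‖ ≤ θbar * ‖u - v‖)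
    (ustar : E) (hustar : ustar ∈ O) (hroot : f ustar = 0)
    (ρ : ℝ) (hρ : ρ = ‖g ustar‖)
    (hball : {u : E | ‖u - ustar‖ ≤ min (ρ / θbar) (1 / (2 * θ * ρ))} ⊆ O)
    (U : ℕ → E)
    (hU0 : ‖U 0 - ustar‖ ≤ min (ρ / θbar) (1 / (2 * θ * ρ)))
    (hUrec : ∀ n, U (n + 1) = U n - g (U n) (f (U n))) :
    (∀ n, ‖U n - ustar‖ ≤ min (ρ / θbar) (1 / (2 * θ * ρ))) ∧
    Tendsto U atTop (𝓝 ustar) ∧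
    (∀ n, ‖U (n + 1) - ustar‖ ≤ ρ * θ * ‖U n - ustar‖ ^ 2) := by
  set r : ℝ := min (ρ / θbar) (1 / (2 * θ * ρ)) with hr
  by_cases hU0z : U 0 = ustar
  · -- trivial case: start at the root
    have hall : ∀ n, U n = ustar := by
      intro n
      induction n with
      | zero => exact hU0z
      | succ n ih => rw [hUrec, ih, hroot]; simp
    refine ⟨fun n => ?_, ?_, fun n => ?_⟩
    · rw [hall n]
      simp only [sub_self, norm_zero]
      exact le_trans (norm_nonneg _) hU0
    · exact tendsto_const_nhds.congr fun n => (hall n).symm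
    · rw [hall n, hall (n + 1)]; simp
  · -- main case
    have hU0pos : 0 < ‖U 0 - ustar‖ := by
      rw [norm_pos_iff, sub_ne_zero]; exact hU0z
    have hrpos : 0 < r := lt_of_lt_of_le hU0pos hU0
    have hr0 : 0 ≤ r := hrpos.le
    have hρ0 : 0 ≤ ρ := hρ ▸ norm_nonneg _
    have hρpos : 0 < ρ := by
      rcases hρ0.lt_or_eq with h | h
      · exact h
      · exfalso
        have : r ≤ ρ / θbar := min_le_left _ _
        rw [← h] at this
        simp at this
        linarith
    have hθbarpos : 0 < θbar := by
      by_contra h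
      push_neg at h
      have h1 : ρ / θbar ≤ 0 := div_nonpos_of_nonneg_of_nonpos hρ0 h
      have : r ≤ ρ / θbar := min_le_left _ _
      linarith
    have h2θρpos : 0 < 2 * θ * ρ := by
      by_contra h
      push_neg at h
      have h1 : 1 / (2 * θ * ρ) ≤ 0 := by
        rcases h.lt_or_eq with h' | h'
        · exact (div_neg_of_pos_of_neg one_pos h').le
        · rw [h']; simp
      have : r ≤ 1 / (2 * θ * ρ) := min_le_right _ _
      linarith
    have hθpos : 0 < θ := by nlinarith
    have hballconv : Convex ℝ {u : E | ‖u - ustar‖ ≤ r} := by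
      have : {u : E | ‖u - ustar‖ ≤ r} = Metric.closedBall ustar r := by
        ext u; simp [Metric.mem_closedBall, dist_eq_norm]
      rw [this]
      exact convex_closedBall ustar r
    have hstarmem : ustar ∈ {u : E | ‖u - ustar‖ ≤ r} := by simp [hr0]
    -- key one-step estimate
    have key : ∀ u, ‖u - ustar‖ ≤ r →
        ‖(u - g u (f u)) - ustar‖ ≤ ρ * θ * ‖u - ustar‖ ^ 2 ∧
        ρ * θ * ‖u - ustar‖ ^ 2 ≤ ‖u - ustar‖ / 2 := by
      intro u hu
      have huO : u ∈ O := hball hu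
      have hu1 : ‖u - ustar‖ ≤ ρ / θbar := hu.trans (min_le_left _ _)
      have hu2 : ‖u - ustar‖ ≤ 1 / (2 * θ * ρ) := hu.trans (min_le_right _ _)
      have hgu : ‖g u‖ ≤ 2 * ρ := by
        have h1 : ‖g u‖ ≤ ‖g ustar‖ + ‖g u - g ustar‖ := norm_le_insert' _ _
        have h2 : ‖g u - g ustar‖ ≤ θbar * ‖u - ustar‖ := hLipInv u huO ustar hustar
        have h3 : θbar * ‖u - ustar‖ ≤ θbar * (ρ / θbar) :=
          mul_le_mul_of_nonneg_left hu1 hθbarpos.le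
        have h4 : θbar * (ρ / θbar) = ρ := by field_simp
        rw [hρ]; linarith
      have htay : ‖f ustar - f u - Df u (ustar - u)‖ ≤ θ / 2 * ‖ustar - u‖ ^ 2 :=
        newton_taylor_aux hballconv (fun w hw => hf w (hball hw))
          (fun a ha b hb => hLip a (hball ha) b (hball hb)) hu hstarmem
      have hid : g u (Df u (u - ustar)) = u - ustar := by
        have h := hinv₂ u huO
        calc g u (Df u (u - ustar)) = ((g u).comp (Df u)) (u - ustar) := rfl
          _ = u - ustar := by rw [h]; rfl
      have heq : (u - g u (f u)) - ustar = g u (Df u (u - ustar) - f u) := by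
        rw [map_sub, hid]; abel
      have heq2 : Df u (u - ustar) - f u = f ustar - f u - Df u (ustar - u) := by
        rw [hroot, map_sub, map_sub]; abel
      have hb1 : ‖(u - g u (f u)) - ustar‖ ≤ ρ * θ * ‖u - ustar‖ ^ 2 := by
        rw [heq]
        calc ‖g u (Df u (u - ustar) - f u)‖
            ≤ ‖g u‖ * ‖Df u (u - ustar) - f u‖ := (g u).le_opNorm _
          _ ≤ (2 * ρ) * (θ / 2 * ‖ustar - u‖ ^ 2) := by
              apply mul_le_mul hgu _ (norm_nonneg _) (by linarith)
              rw [heq2]; exact htay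
          _ = ρ * θ * ‖u - ustar‖ ^ 2 := by rw [norm_sub_rev]; ring
      refine ⟨hb1, ?_⟩
      have h3 : ‖u - ustar‖ * (2 * θ * ρ) ≤ 1 := (le_div_iff₀ h2θρpos).mp hu2
      nlinarith [norm_nonneg (u - ustar),
        mul_le_mul_of_nonneg_left h3 (norm_nonneg (u - ustar))]
    have hmem : ∀ n, ‖U n - ustar‖ ≤ r := by
      intro n
      induction n with
      | zero => exact hU0
      | succ n ih =>
        rw [hUrec n]
        obtain ⟨k1, k2⟩ := key _ ih
        have := k1.trans k2
        linarith
    have hquad : ∀ n, ‖U (n + 1) - ustar‖ ≤ ρ * θ * ‖U n - ustar‖ ^ 2 := by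
      intro n
      rw [hUrec n]
      exact (key _ (hmem n)).1
    have hhalf : ∀ n, ‖U (n + 1) - ustar‖ ≤ ‖U n - ustar‖ / 2 := by
      intro n
      rw [hUrec n]
      exact (key _ (hmem n)).1.trans (key _ (hmem n)).2
    have hgeom : ∀ n, ‖U n - ustar‖ ≤ (1 / 2 : ℝ) ^ n * ‖U 0 - ustar‖ := by
      intro n
      induction n with
      | zero => simp
      | succ n ih =>
        calc ‖U (n + 1) - ustar‖ ≤ ‖U n - ustar‖ / 2 := hhalf n
          _ ≤ ((1 / 2 : ℝ) ^ n * ‖U 0 - ustar‖) / 2 := by linarith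
          _ = (1 / 2 : ℝ) ^ (n + 1) * ‖U 0 - ustar‖ := by ring
    have htend : Tendsto (fun n => ‖U n - ustar‖) atTop (𝓝 0) := by
      have hlim : Tendsto (fun n : ℕ => (1 / 2 : ℝ) ^ n * ‖U 0 - ustar‖) atTop (𝓝 0) := by
        have := tendsto_pow_atTop_nhds_zero_of_lt_one (by norm_num : (0:ℝ) ≤ 1 / 2)
          (by norm_num : (1 / 2 : ℝ) < 1)
        simpa using this.mul_const ‖U 0 - ustar‖
      exact squeeze_zero (fun n => norm_nonneg _) hgeom hlim
    refine ⟨hmem, ?_, hquad⟩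
    rw [tendsto_iff_norm_sub_tendsto_zero]
    exact htend
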